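/- Let E : ℕ → ℝ with E(r) ≥ 0 for all r, and suppose there exist constants c > 0, α > 0, β > 0 and r₁ ∈ ℕ such that E(r) ≤ c · exp(−α r^β) for all r ≥ r₁. Let γ > 1/2 and let R : ℕ → ℕ satisfy R(n) ≥ ⌈((log c)/α + (γ/α) · log n)^{1/β}⌉ for all n with (log c)/α + (γ/α) log n > 0. Then √n · E(R(n)) → 0 as n → ∞; in fact √n · E(R(n)) ≤ n^{1/2 − γ} for all sufficiently large n. -/

import Mathlib

open Filter Topology

/-- Theorem 9(b) of the paper: under an exponential convergence rate
`E(r) ≤ c exp(-α r^β)` (for all sufficiently large `r`), the link function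
`R(n) ≥ ⌈((log c)/α + (γ/α) log n)^{1/β}⌉` with `γ > 1/2` yields
`√n · E(R(n)) → 0`, and indeed `√n · E(R(n)) ≤ n^{1/2-γ}` eventually. -/
theorem stmt_6 (E : ℕ → ℝ) (hE : ∀ r, 0 ≤ E r)
    (c α β : ℝ) (hc : 0 < c) (hα : 0 < α) (hβ : 0 < β) (r1 : ℕ)
    (hrate : ∀ r : ℕ, r1 ≤ r → E r ≤ c * Real.exp (-(α * (r : ℝ) ^ β)))
    (γ : ℝ) (hγ : 1 / 2 < γ)
    (R : ℕ → ℕ)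
    (hR : ∀ n : ℕ, 0 < Real.log c / α + γ / α * Real.log n →
      ⌈(Real.log c / α + γ / α * Real.log n) ^ (1 / β)⌉₊ ≤ R n) :
    Tendsto (fun n : ℕ => Real.sqrt n * E (R n)) atTop (𝓝 0) ∧
      ∃ N : ℕ, ∀ n ≥ N, Real.sqrt n * E (R n) ≤ (n : ℝ) ^ (1 / 2 - γ) := by
  set f : ℕ → ℝ := fun n => Real.log c / α + γ / α * Real.log n with hf
  have hγα : 0 < γ / α := div_pos (by linarith) hα
  have hftop : Tendsto f atTop atTop := by
    apply tendsto_atTop_add_const_left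
    exact (Real.tendsto_log_atTop.comp tendsto_natCast_atTop_atTop).const_mul_atTop hγα
  have hrtop : Tendsto (fun n => f n ^ (1 / β)) atTop atTop :=
    (tendsto_rpow_atTop (by positivity)).comp hftop
  have key : ∀ᶠ n : ℕ in atTop, Real.sqrt n * E (R n) ≤ (n : ℝ) ^ (1 / 2 - γ) := by
    filter_upwards [hftop.eventually_gt_atTop 0, hrtop.eventually_ge_atTop (r1 : ℝ),
      eventually_ge_atTop 1] with n hfn hr1 hn1
    have hn0 : (0 : ℝ) < n := by exact_mod_cast hn1
    have hRn : (f n) ^ (1 / β) ≤ (R n : ℝ) := by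
      calc (f n) ^ (1 / β) ≤ (⌈(f n) ^ (1 / β)⌉₊ : ℝ) := Nat.le_ceil _
        _ ≤ (R n : ℝ) := by exact_mod_cast hR n hfn
    have hr1R : r1 ≤ R n := by exact_mod_cast hr1.trans hRn
    have hpow : f n ≤ (R n : ℝ) ^ β := by
      have := Real.rpow_le_rpow (by positivity) hRn hβ.le
      rwa [← Real.rpow_mul hfn.le, one_div_mul_cancel hβ.ne', Real.rpow_one] at this
    have hafn : α * f n = Real.log c + γ * Real.log n := by
      simp only [hf]; field_simp
    have hexp : E (R n) ≤ (n : ℝ) ^ (-γ) := by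
      calc E (R n) ≤ c * Real.exp (-(α * (R n : ℝ) ^ β)) := hrate _ hr1R
        _ ≤ c * Real.exp (-(α * f n)) := by
            have : α * f n ≤ α * (R n : ℝ) ^ β := mul_le_mul_of_nonneg_left hpow hα.le
            exact mul_le_mul_of_nonneg_left (Real.exp_le_exp.mpr (by linarith)) hc.le
        _ = (n : ℝ) ^ (-γ) := by
            rw [hafn, neg_add, Real.exp_add, Real.exp_neg, Real.exp_log hc,
              Real.rpow_def_of_pos hn0]
            rw [mul_comm (Real.log (n:ℝ)) (-γ)]; field_simp
    calc Real.sqrt n * E (R n) ≤ Real.sqrt n * (n : ℝ) ^ (-γ) :=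
          mul_le_mul_of_nonneg_left hexp (Real.sqrt_nonneg _)
      _ = (n : ℝ) ^ (1 / 2 - γ) := by
          rw [Real.sqrt_eq_rpow, ← Real.rpow_add hn0, sub_eq_add_neg]
  constructor
  · have hb : Tendsto (fun n : ℕ => (n : ℝ) ^ (1 / 2 - γ)) atTop (𝓝 0) := by
      have := (tendsto_rpow_neg_atTop (y := γ - 1 / 2) (by linarith)).comp
        tendsto_natCast_atTop_atTop
      simpa [neg_sub, Function.comp_def] using this
    exact squeeze_zero' (Eventually.of_forall fun n => mul_nonneg (Real.sqrt_nonneg _) (hE _))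
      key hb
  · obtain ⟨N, hN⟩ := eventually_atTop.mp key
    exact ⟨N, hN⟩
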